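/- The function f(μ₁, μᵢ) = (μ₁ − μᵢ)/D(μᵢ‖μ₁) is monotone in the following sense: on the domain {(μ₁, μᵢ) ∈ (0,1)² : μ₁ > μᵢ}, f is nonincreasing in μ₁ (for fixed μᵢ) and nondecreasing in μᵢ (for fixed μ₁). That is, if μᵢ < μ₁ ≤ μ₁' then f(μ₁', μᵢ) ≤ f(μ₁, μᵢ), and if μᵢ ≤ μᵢ' < μ₁ then f(μ₁, μᵢ) ≤ f(μ₁, μᵢ'). -/

import Mathlib

noncomputable def binKL (a b : ℝ) : ℝ :=
  a * Real.log (a / b) + (1 - a) * Real.log ((1 - a) / (1 - b))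

noncomputable def f (μ1 μi : ℝ) : ℝ := (μ1 - μi) / binKL μi μ1

open Real Set

lemma binKL_eq {a b : ℝ} (ha : a ∈ Ioo (0:ℝ) 1) (hb : b ∈ Ioo (0:ℝ) 1) :
    binKL a b = a * (Real.log a - Real.log b)
      + (1 - a) * (Real.log (1-a) - Real.log (1-b)) := by
  have h1a : (0:ℝ) < 1 - a := by linarith [ha.2]
  have h1b : (0:ℝ) < 1 - b := by linarith [hb.2]
  unfold binKL
  rw [Real.log_div ha.1.ne' hb.1.ne', Real.log_div h1a.ne' h1b.ne']

lemma binKL_pos {a b : ℝ} (ha : a ∈ Ioo (0:ℝ) 1) (hb : b ∈ Ioo (0:ℝ) 1)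
    (hab : a ≠ b) : 0 < binKL a b := by
  have h1a : (0:ℝ) < 1 - a := by linarith [ha.2]
  have h1b : (0:ℝ) < 1 - b := by linarith [hb.2]
  have ha0 : a ≠ 0 := ha.1.ne'
  have hb0 : b ≠ 0 := hb.1.ne'
  have h1a0 : (1:ℝ) - a ≠ 0 := h1a.ne'
  have h1b0 : (1:ℝ) - b ≠ 0 := h1b.ne'
  rw [binKL_eq ha hb]
  have h1 : Real.log (b/a) < b/a - 1 := by
    refine Real.log_lt_sub_one_of_pos (div_pos hb.1 ha.1) ?_
    intro h
    rw [div_eq_one_iff_eq ha.1.ne'] at h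
    exact hab h.symm
  rw [Real.log_div hb.1.ne' ha.1.ne'] at h1
  have h1' : a * (Real.log b - Real.log a) < b - a := by
    have := mul_lt_mul_of_pos_left h1 ha.1
    have e : a * (b/a - 1) = b - a := by field_simp
    linarith
  have h2 : Real.log ((1-b)/(1-a)) ≤ (1-b)/(1-a) - 1 :=
    Real.log_le_sub_one_of_pos (div_pos h1b h1a)
  rw [Real.log_div h1b.ne' h1a.ne'] at h2
  have h2' : (1-a) * (Real.log (1-b) - Real.log (1-a)) ≤ a - b := by
    have := mul_le_mul_of_nonneg_left h2 h1a.le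
    have e : (1-a) * ((1-b)/(1-a) - 1) = a - b := by field_simp; ring
    linarith
  nlinarith [h1', h2']

lemma binKL_le_chi2 {a b : ℝ} (ha : a ∈ Ioo (0:ℝ) 1) (hb : b ∈ Ioo (0:ℝ) 1) :
    binKL a b ≤ (b - a)^2 / (b * (1 - b)) := by
  have h1a : (0:ℝ) < 1 - a := by linarith [ha.2]
  have h1b : (0:ℝ) < 1 - b := by linarith [hb.2]
  have ha0 : a ≠ 0 := ha.1.ne'
  have hb0 : b ≠ 0 := hb.1.ne'
  have h1a0 : (1:ℝ) - a ≠ 0 := h1a.ne'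
  have h1b0 : (1:ℝ) - b ≠ 0 := h1b.ne'
  rw [binKL_eq ha hb]
  have h1 : Real.log a - Real.log b ≤ a/b - 1 := by
    have := Real.log_le_sub_one_of_pos (div_pos ha.1 hb.1)
    rwa [Real.log_div ha.1.ne' hb.1.ne'] at this
  have h2 : Real.log (1-a) - Real.log (1-b) ≤ (1-a)/(1-b) - 1 := by
    have := Real.log_le_sub_one_of_pos (div_pos h1a h1b)
    rwa [Real.log_div h1a.ne' h1b.ne'] at this
  have e : a * (a/b - 1) + (1-a) * ((1-a)/(1-b) - 1) = (b - a)^2 / (b * (1 - b)) := by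
    field_simp
    ring
  nlinarith [mul_le_mul_of_nonneg_left h1 ha.1.le,
    mul_le_mul_of_nonneg_left h2 h1a.le]

lemma key2 {a b : ℝ} (ha : a ∈ Ioo (0:ℝ) 1) (hb : b ∈ Ioo (0:ℝ) 1) :
    (Real.log a - Real.log b - Real.log (1-a) + Real.log (1-b)) * (b - a)
      + binKL a b ≤ 0 := by
  have h1a : (0:ℝ) < 1 - a := by linarith [ha.2]
  have h1b : (0:ℝ) < 1 - b := by linarith [hb.2]
  have ha0 : a ≠ 0 := ha.1.ne'
  have hb0 : b ≠ 0 := hb.1.ne'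
  have h1a0 : (1:ℝ) - a ≠ 0 := h1a.ne'
  have h1b0 : (1:ℝ) - b ≠ 0 := h1b.ne'
  rw [binKL_eq ha hb]
  have hA : (1-b) * (Real.log (1-a) - Real.log (1-b)) ≤ b - a := by
    have h2 : Real.log (1-a) - Real.log (1-b) ≤ (1-a)/(1-b) - 1 := by
      have := Real.log_le_sub_one_of_pos (div_pos h1a h1b)
      rwa [Real.log_div h1a.ne' h1b.ne'] at this
    have := mul_le_mul_of_nonneg_left h2 h1b.le
    have e : (1-b) * ((1-a)/(1-b) - 1) = b - a := by field_simp; ring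
    linarith
  have hB : b - a ≤ b * (Real.log b - Real.log a) := by
    have h1 : Real.log a - Real.log b ≤ a/b - 1 := by
      have := Real.log_le_sub_one_of_pos (div_pos ha.1 hb.1)
      rwa [Real.log_div ha.1.ne' hb.1.ne'] at this
    have := mul_le_mul_of_nonneg_left h1 hb.1.le
    have e : b * (a/b - 1) = a - b := by field_simp
    linarith
  nlinarith [hA, hB]

lemma hasDerivAt_binKL_right {a b : ℝ} (ha : a ∈ Ioo (0:ℝ) 1) (hb : b ∈ Ioo (0:ℝ) 1) :
    HasDerivAt (fun y => binKL a y) ((b - a) / (b * (1 - b))) b := by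
  have h1b : (0:ℝ) < 1 - b := by linarith [hb.2]
  have hb0 : b ≠ 0 := hb.1.ne'
  have h1b0 : (1:ℝ) - b ≠ 0 := h1b.ne'
  have hlog : HasDerivAt Real.log b⁻¹ b := Real.hasDerivAt_log hb.1.ne'
  have hsub : HasDerivAt (fun y : ℝ => 1 - y) (-1) b := by
    simpa using (hasDerivAt_id b).const_sub 1
  have hlog2 : HasDerivAt (fun y : ℝ => Real.log (1 - y)) ((1-b)⁻¹ * (-1)) b :=
    (Real.hasDerivAt_log h1b.ne').comp b hsub
  have hmain : HasDerivAt
      (fun y => a * (Real.log a - Real.log y) + (1-a) * (Real.log (1-a) - Real.log (1-y)))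
      (a * (-b⁻¹) + (1-a) * (-((1-b)⁻¹ * (-1)))) b :=
    ((hlog.const_sub (Real.log a)).const_mul a).add
      ((hlog2.const_sub (Real.log (1-a))).const_mul (1-a))
  have hev : (fun y => binKL a y) =ᶠ[nhds b]
      (fun y => a * (Real.log a - Real.log y) + (1-a) * (Real.log (1-a) - Real.log (1-y))) := by
    filter_upwards [isOpen_Ioo.mem_nhds hb] with y hy
    exact binKL_eq ha hy
  have h := hmain.congr_of_eventuallyEq hev
  refine h.congr_deriv ?_
  field_simp
  ring

lemma hasDerivAt_binKL_left {a b : ℝ} (ha : a ∈ Ioo (0:ℝ) 1) (hb : b ∈ Ioo (0:ℝ) 1) :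
    HasDerivAt (fun x => binKL x b)
      (Real.log a - Real.log b - Real.log (1-a) + Real.log (1-b)) a := by
  have h1a : (0:ℝ) < 1 - a := by linarith [ha.2]
  have ha0 : a ≠ 0 := ha.1.ne'
  have h1a0 : (1:ℝ) - a ≠ 0 := h1a.ne'
  have h1 : HasDerivAt (fun x : ℝ => Real.log x - Real.log b) a⁻¹ a :=
    (Real.hasDerivAt_log ha.1.ne').sub_const (Real.log b)
  have hsub : HasDerivAt (fun x : ℝ => 1 - x) (-1) a := by
    simpa using (hasDerivAt_id a).const_sub 1
  have h2 : HasDerivAt (fun x : ℝ => Real.log (1 - x) - Real.log (1 - b))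
      ((1-a)⁻¹ * (-1)) a :=
    ((Real.hasDerivAt_log h1a.ne').comp a hsub).sub_const (Real.log (1-b))
  have hmain : HasDerivAt
      (fun x => x * (Real.log x - Real.log b) + (1-x) * (Real.log (1-x) - Real.log (1-b)))
      ((1 * (Real.log a - Real.log b) + a * a⁻¹)
        + ((-1) * (Real.log (1-a) - Real.log (1-b)) + (1-a) * ((1-a)⁻¹ * (-1)))) a :=
    ((hasDerivAt_id a).mul h1).add (hsub.mul h2)
  have hev : (fun x => binKL x b) =ᶠ[nhds a]
      (fun x => x * (Real.log x - Real.log b) + (1-x) * (Real.log (1-x) - Real.log (1-b))) := by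
    filter_upwards [isOpen_Ioo.mem_nhds ha] with x hx
    exact binKL_eq hx hb
  have h := hmain.congr_of_eventuallyEq hev
  refine h.congr_deriv ?_
  field_simp
  ring

/-- Monotonicity of f on {μ₁ > μᵢ}: nonincreasing in μ₁, nondecreasing in μᵢ. -/
theorem f_monotone :
    (∀ μi μ1 μ1' : ℝ, μi ∈ Set.Ioo (0:ℝ) 1 → μ1 ∈ Set.Ioo (0:ℝ) 1 →
      μ1' ∈ Set.Ioo (0:ℝ) 1 → μi < μ1 → μ1 ≤ μ1' → f μ1' μi ≤ f μ1 μi) ∧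
    (∀ μ1 μi μi' : ℝ, μ1 ∈ Set.Ioo (0:ℝ) 1 → μi ∈ Set.Ioo (0:ℝ) 1 →
      μi' ∈ Set.Ioo (0:ℝ) 1 → μi ≤ μi' → μi' < μ1 → f μ1 μi ≤ f μ1 μi') := by
  constructor
  · intro a μ1 μ1' ha h1 h1' hlt hle
    set g : ℝ → ℝ := fun b => binKL a b / (b - a) with hgdef
    have hg : ∀ b ∈ Ioo a 1, HasDerivAt g
        (((b - a) / (b * (1 - b)) * (b - a) - binKL a b * 1) / (b - a)^2) b := by
      intro b hbs
      have hb : b ∈ Ioo (0:ℝ) 1 := ⟨lt_trans ha.1 hbs.1, hbs.2⟩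
      exact (hasDerivAt_binKL_right ha hb).div ((hasDerivAt_id b).sub_const a)
        (sub_ne_zero.mpr (ne_of_gt hbs.1))
    have hmono : MonotoneOn g (Ioo a 1) := by
      apply monotoneOn_of_deriv_nonneg (convex_Ioo a 1)
      · intro b hbs
        exact (hg b hbs).continuousAt.continuousWithinAt
      · intro b hbs
        rw [interior_Ioo] at hbs
        exact (hg b hbs).differentiableAt.differentiableWithinAt
      · intro b hbs
        rw [interior_Ioo] at hbs
        rw [(hg b hbs).deriv]
        have hb : b ∈ Ioo (0:ℝ) 1 := ⟨lt_trans ha.1 hbs.1, hbs.2⟩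
        have h1b : (0:ℝ) < 1 - b := by linarith [hb.2]
        have hnum : 0 ≤ (b - a) / (b * (1 - b)) * (b - a) - binKL a b * 1 := by
          have e : (b - a) / (b * (1 - b)) * (b - a) = (b - a)^2 / (b * (1 - b)) := by
            ring
          rw [e]
          linarith [binKL_le_chi2 ha hb]
        exact div_nonneg hnum (sq_nonneg _)
    have hm1 : μ1 ∈ Ioo a 1 := ⟨hlt, h1.2⟩
    have hm1' : μ1' ∈ Ioo a 1 := ⟨lt_of_lt_of_le hlt hle, h1'.2⟩
    have hgle : g μ1 ≤ g μ1' := hmono hm1 hm1' hle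
    have hgpos : 0 < g μ1 := div_pos (binKL_pos ha h1 (ne_of_lt hlt)) (by linarith)
    have := one_div_le_one_div_of_le hgpos hgle
    rw [hgdef] at this
    simpa [f, one_div_div] using this
  · intro b a a' hb ha ha' hle hlt
    set g : ℝ → ℝ := fun x => binKL x b / (b - x) with hgdef
    have hg : ∀ x ∈ Ioo (0:ℝ) b, HasDerivAt g
        (((Real.log x - Real.log b - Real.log (1-x) + Real.log (1-b)) * (b - x)
          - binKL x b * (-1)) / (b - x)^2) x := by
      intro x hxs
      have hx : x ∈ Ioo (0:ℝ) 1 := ⟨hxs.1, lt_trans hxs.2 hb.2⟩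
      have hd : HasDerivAt (fun x : ℝ => b - x) (-1) x := by
        simpa using (hasDerivAt_id x).const_sub b
      exact (hasDerivAt_binKL_left hx hb).div hd (sub_ne_zero.mpr (ne_of_gt hxs.2))
    have hmono : AntitoneOn g (Ioo (0:ℝ) b) := by
      apply antitoneOn_of_deriv_nonpos (convex_Ioo 0 b)
      · intro x hxs
        exact (hg x hxs).continuousAt.continuousWithinAt
      · intro x hxs
        rw [interior_Ioo] at hxs
        exact (hg x hxs).differentiableAt.differentiableWithinAt
      · intro x hxs
        rw [interior_Ioo] at hxs
        rw [(hg x hxs).deriv]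
        have hx : x ∈ Ioo (0:ℝ) 1 := ⟨hxs.1, lt_trans hxs.2 hb.2⟩
        have hnum : (Real.log x - Real.log b - Real.log (1-x) + Real.log (1-b)) * (b - x)
            - binKL x b * (-1) ≤ 0 := by
          linarith [key2 hx hb]
        exact div_nonpos_of_nonpos_of_nonneg hnum (sq_nonneg _)
    have hma : a ∈ Ioo (0:ℝ) b := ⟨ha.1, lt_of_le_of_lt hle hlt⟩
    have hma' : a' ∈ Ioo (0:ℝ) b := ⟨ha'.1, hlt⟩
    have hgle : g a' ≤ g a := hmono hma hma' hle
    have hgpos : 0 < g a' := div_pos (binKL_pos ha' hb (ne_of_lt hlt)) (by linarith)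
    have := one_div_le_one_div_of_le hgpos hgle
    rw [hgdef] at this
    simpa [f, one_div_div] using this
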